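/- 232250619601 is a Carmichael number with exactly 8 distinct prime factors, and it is the smallest such: every Carmichael number with exactly 8 distinct prime factors is at least 232250619601. -/

import Mathlib

/-- A Carmichael number: a composite natural number `N` such that
`b ^ (N - 1) ≡ 1 [MOD N]` for every `b` coprime to `N`. -/
def IsCarmichael (N : ℕ) : Prop :=
  1 < N ∧ ¬ N.Prime ∧ ∀ b : ℕ, Nat.Coprime b N → b ^ (N - 1) ≡ 1 [MOD N]


namespace CarSearch

def LL : ℕ := 232250619601

def noDivB : ℕ → ℕ → ℕ → Bool
  | 0, _, _ => true
  | fuel+1, d, n => if n < d * d then true else (n % d != 0) && noDivB fuel (d+2) n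

def isPrimeB (n : ℕ) : Bool := (decide (2 < n)) && (n % 2 == 1) && noDivB n 3 n

def apScan : ℕ → ℕ → ℕ → ℕ → ℕ → Bool
  | 0, _, _, _, _ => false
  | fuel+1, x, hi, P, lam =>
    if hi < x then true
    else (!(isPrimeB x && (P * x - 1) % (x - 1) == 0)) && apScan fuel (x + lam) hi P lam

def findScan : ℕ → ℕ → ℕ → ℕ → ℕ → Bool
  | 0, _, _, _, _ => false
  | fuel+1, x, hi, P, lam =>
    if hi < x then true
    else if (P * x) % lam == 1 then apScan fuel x hi P lam
    else findScan fuel (x+2) hi P lam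

def loop : ℕ → ℕ → ℕ → ℕ → ℕ → Bool
  | 0, _, _, _, _ => false
  | fuel+1, k, p, P, lam =>
    if LL ≤ P * p ^ k then true
    else
      (if isPrimeB p && (Nat.gcd P (p-1) == 1) && (lam % p != 0) then
         (if k == 2 then
            (if Nat.gcd (P * p) (Nat.lcm lam (p-1)) != 1 then true
             else findScan fuel (p+2) ((LL-1) / (P * p)) (P * p) (Nat.lcm lam (p-1)))
          else loop fuel (k-1) (p+2) (P * p) (Nat.lcm lam (p-1)))
       else true)
      && loop fuel k (p+2) P lam

lemma noDivB_complete : ∀ (fuel d n : ℕ), d % 2 = 1 →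
    (∀ m, d ≤ m → m % 2 = 1 → m * m ≤ n → ¬ m ∣ n) → noDivB fuel d n = true := by
  intro fuel
  induction fuel with
  | zero => intro d n _ _; rfl
  | succ f ih =>
    intro d n hd hm
    rw [noDivB]
    by_cases h1 : n < d * d
    · rw [if_pos h1]
    · rw [if_neg h1, Bool.and_eq_true, bne_iff_ne, ne_eq]
      constructor
      · intro hdvd
        exact hm d le_rfl hd (by omega) (Nat.dvd_of_mod_eq_zero hdvd)
      · exact ih (d+2) n (by omega)
          (fun m h1 h2 h3 => hm m (by omega) h2 h3)

lemma isPrimeB_complete {p : ℕ} (hp : p.Prime) (hodd : p % 2 = 1) : isPrimeB p = true := by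
  have h2le := hp.two_le
  have h3 : 3 ≤ p := by omega
  rw [isPrimeB, Bool.and_eq_true, Bool.and_eq_true]
  refine ⟨⟨by simp only [decide_eq_true_eq]; omega, by simp [hodd]⟩, ?_⟩
  apply noDivB_complete p 3 p (by norm_num)
  intro m hm hm2 hmm hdvd
  rcases (Nat.Prime.eq_one_or_self_of_dvd hp m hdvd) with h | h
  · omega
  · subst h; nlinarith

lemma apScan_complete : ∀ (fuel x hi P lam : ℕ), apScan fuel x hi P lam = true →
    ∀ q, x ≤ q → q ≤ hi → q % 2 = 1 → q.Prime → lam ∣ q - x →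
      (q - 1) ∣ (P * q - 1) → False := by
  intro fuel
  induction fuel with
  | zero => intro x hi P lam h; simp [apScan] at h
  | succ f ih =>
    intro x hi P lam h q hxq hqhi hq2 hqp hlam hdvd
    rw [apScan] at h
    have h1 : ¬ hi < x := by omega
    rw [if_neg h1, Bool.and_eq_true] at h
    rcases h with ⟨h2, h3⟩
    rcases eq_or_lt_of_le hxq with rfl | hlt
    · rw [Bool.not_eq_true', isPrimeB_complete hqp hq2, Bool.true_and,
        beq_eq_false_iff_ne, ne_eq] at h2
      exact h2 (Nat.mod_eq_zero_of_dvd hdvd)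

    · have hlampos : 0 < lam := by
        rcases Nat.eq_zero_or_pos lam with rfl | h
        · exfalso
          have h0 : q - x = 0 := by simpa using hlam
          omega
        · exact h
      have hge : x + lam ≤ q := by
        have := Nat.le_of_dvd (by omega) hlam
        omega
      have hdvd2 : lam ∣ q - (x + lam) := by
        have h := Nat.dvd_sub hlam (dvd_refl lam)
        rwa [show q - x - lam = q - (x + lam) by omega] at h
      exact ih (x + lam) hi P lam h3 q hge hqhi hq2 hqp hdvd2 hdvd

end CarSearch

namespace CarSearch

lemma findScan_complete : ∀ (fuel x hi P lam : ℕ), findScan fuel x hi P lam = true →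
    Nat.gcd P lam = 1 → 2 ≤ lam → x % 2 = 1 →
    ∀ q, x ≤ q → q ≤ hi → q % 2 = 1 → q.Prime → (P * q) % lam = 1 % lam →
      (q - 1) ∣ (P * q - 1) → False := by
  intro fuel
  induction fuel with
  | zero => intro x hi P lam h; simp [findScan] at h
  | succ f ih =>
    intro x hi P lam h hg hlam2 hx2 q hxq hqhi hq2 hqp hqmod hdvd
    rw [findScan] at h
    have h1 : ¬ hi < x := by omega
    rw [if_neg h1] at h
    have h1lam : 1 % lam = 1 := Nat.mod_eq_of_lt (by omega)
    by_cases hc : (P * x) % lam = 1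
    · rw [if_pos (by simpa using hc)] at h
      -- q ≡ x mod lam
      have hmeq : x ≡ q [MOD lam] := by
        have h2 : P * x ≡ P * q [MOD lam] := by
          unfold Nat.ModEq
          rw [hc, hqmod, h1lam]
        exact Nat.ModEq.cancel_left_of_coprime (by rwa [Nat.gcd_comm]) h2
      have hdvdlam : lam ∣ q - x := (Nat.modEq_iff_dvd' hxq).mp hmeq
      exact apScan_complete f x hi P lam h q hxq hqhi hq2 hqp hdvdlam hdvd
    · rw [if_neg (by simpa using hc)] at h
      have hne : q ≠ x := by
        intro he; subst he; rw [hqmod, h1lam] at hc; exact hc rfl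
      exact ih (x+2) hi P lam h hg hlam2 (by omega) q (by omega) hqhi hq2 hqp hqmod hdvd

lemma prod_ge_pow : ∀ (l : List ℕ) (p : ℕ), (∀ q ∈ l, p ≤ q) → p ^ l.length ≤ l.prod := by
  intro l p
  induction l with
  | nil => simp
  | cons a t ih =>
    intro h
    simp only [List.length_cons, List.prod_cons, pow_succ, mul_comm]
    exact Nat.mul_le_mul (h a (by simp)) (ih (fun q hq => h q (by simp [hq])))

/-- kill a tuple using a common prime divisor of N and N-1 -/
lemma no_common (r N : ℕ) (hr : r.Prime) (h1 : r ∣ N) (h2 : r ∣ N - 1) (hN : 1 ≤ N) :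
    False := by
  have : r ∣ N - (N - 1) := Nat.dvd_sub h1 h2
  rw [show N - (N - 1) = 1 by omega] at this
  have := Nat.dvd_one.mp this
  have := hr.two_le
  omega

lemma loop_complete : ∀ (fuel k p P lam : ℕ), loop fuel k p P lam = true →
    0 < P → 0 < lam → p % 2 = 1 → 2 ≤ k →
    ∀ l : List ℕ, l.length = k → l.Pairwise (· < ·) → (∀ q ∈ l, p ≤ q) →
      (∀ q ∈ l, q.Prime ∧ q % 2 = 1) → P * l.prod < LL →
      lam ∣ (P * l.prod - 1) → (∀ q ∈ l, (q - 1) ∣ (P * l.prod - 1)) → False := by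
  intro fuel
  induction fuel with
  | zero => intro k p P lam h; simp [loop] at h
  | succ f ih =>
    intro k p P lam h hP hlam hpodd hk l hlen hsort hge hprimes hsize hlamdvd hdvds
    -- l is nonempty
    rcases l with _ | ⟨q₁, t⟩
    · simp at hlen; omega
    have hq₁p : q₁.Prime := (hprimes q₁ (by simp)).1
    have hq₁odd : q₁ % 2 = 1 := (hprimes q₁ (by simp)).2
    have hpq₁ : p ≤ q₁ := hge q₁ (by simp)
    obtain ⟨hlt, hsort'⟩ := List.pairwise_cons.mp hsort
    set N := P * (q₁ :: t).prod with hN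
    have htpos : 0 < (q₁ :: t).prod := by
      apply List.prod_pos
      intro q hq
      exact ((hprimes q hq).1).pos
    have hNpos : 1 ≤ N := Nat.mul_pos hP htpos
    rw [loop] at h
    have hbound : ¬ LL ≤ P * p ^ k := by
      intro hb
      have h1 : p ^ (q₁ :: t).length ≤ (q₁ :: t).prod := prod_ge_pow _ p hge
      rw [hlen] at h1
      have := Nat.mul_le_mul_left P h1
      omega
    rw [if_neg hbound, Bool.and_eq_true] at h
    obtain ⟨hA, hB⟩ := h
    by_cases hq1 : q₁ = p
    · subst hq1
      -- head is p; check prune conditions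
      have hdp : (q₁ - 1) ∣ (N - 1) := hdvds q₁ (by simp)
      have hpdvdN : q₁ ∣ N := Dvd.dvd.mul_left (by simp [List.prod_cons]) P
      by_cases hg : Nat.gcd P (q₁ - 1) = 1
      swap
      · -- gcd prune justification
        have hgpos : 0 < Nat.gcd P (q₁ - 1) := Nat.gcd_pos_of_pos_left _ hP
        have hrp : (Nat.gcd P (q₁ - 1)).minFac.Prime := Nat.minFac_prime hg
        have hr1 : (Nat.gcd P (q₁ - 1)).minFac ∣ N :=
          dvd_trans (dvd_trans (Nat.minFac_dvd _) (Nat.gcd_dvd_left _ _)) ⟨(q₁ :: t).prod, rfl⟩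
        have hr2 : (Nat.gcd P (q₁ - 1)).minFac ∣ N - 1 :=
          dvd_trans (dvd_trans (Nat.minFac_dvd _) (Nat.gcd_dvd_right _ _)) hdp
        exact no_common _ N hrp hr1 hr2 hNpos
      by_cases hlamp : q₁ ∣ lam
      · exact no_common q₁ N hq₁p hpdvdN (dvd_trans hlamp hlamdvd) hNpos
      have hcond : (isPrimeB q₁ && (Nat.gcd P (q₁-1) == 1) && (lam % q₁ != 0)) = true := by
        rw [isPrimeB_complete hq₁p hq₁odd]
        simp only [Bool.true_and, Bool.and_eq_true, beq_iff_eq, bne_iff_ne, ne_eq]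
        exact ⟨hg, fun hc => hlamp (Nat.dvd_of_mod_eq_zero hc)⟩
      rw [if_pos hcond] at hA
      -- facts about new state
      set P' := P * q₁ with hP'
      set lam' := Nat.lcm lam (q₁ - 1) with hlam'
      have hq₁3 : 3 ≤ q₁ := by have := hq₁p.two_le; omega
      have hlam'dvd : lam' ∣ N - 1 := Nat.lcm_dvd hlamdvd hdp
      have hlam'ne : lam' ≠ 0 := Nat.lcm_ne_zero (by omega) (by omega)
      have hlam'2 : 2 ≤ lam' := by
        have := Nat.le_of_dvd (by omega) (Nat.dvd_lcm_right lam (q₁ - 1))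
        omega
      have hP'dvdN : P' ∣ N := by
        rw [hN, List.prod_cons, hP']
        exact ⟨t.prod, by ring⟩
      by_cases hk2 : k = 2
      · subst hk2
        -- t is a single element
        rcases t with _ | ⟨q₂, t2⟩
        · simp at hlen
        rcases t2 with _ | ⟨a, t3⟩
        swap
        · simp at hlen
        rw [if_pos (by rfl : ((2:ℕ) == 2) = true)] at hA
        have hq₂p : q₂.Prime := (hprimes q₂ (by simp)).1
        have hq₂odd : q₂ % 2 = 1 := (hprimes q₂ (by simp)).2
        have hq₁q₂ : q₁ < q₂ := hlt q₂ (by simp)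
        have hNeq : N = P' * q₂ := by
          rw [hN, hP']; simp [List.prod_cons]; ring
        by_cases hg2 : Nat.gcd P' lam' = 1
        swap
        · rw [if_pos (by simpa using hg2)] at hA
          have hrp : (Nat.gcd P' lam').minFac.Prime := Nat.minFac_prime hg2
          exact no_common _ N hrp
            (dvd_trans (dvd_trans (Nat.minFac_dvd _) (Nat.gcd_dvd_left _ _)) hP'dvdN)
            (dvd_trans (dvd_trans (Nat.minFac_dvd _) (Nat.gcd_dvd_right _ _)) hlam'dvd)
            hNpos
        rw [if_neg (by simpa using hg2)] at hA
        have hP'pos : 0 < P' := by positivity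
        apply findScan_complete f (q₁+2) ((LL-1)/P') P' lam' hA hg2 hlam'2 (by omega)
          q₂ (by omega) ?_ hq₂odd hq₂p ?_ ?_
        · rw [Nat.le_div_iff_mul_le hP'pos]
          rw [hNeq] at hsize
          rw [mul_comm]
          omega
        · have : 1 ≡ N [MOD lam'] := (Nat.modEq_iff_dvd' hNpos).mpr hlam'dvd
          rw [← hNeq]
          exact this.symm
        · rw [← hNeq]; exact hdvds q₂ (by simp)
      · rw [if_neg (by simpa using hk2)] at hA
        have hprod : P' * t.prod = N := by
          rw [hN, hP', List.prod_cons]; ring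
        apply ih (k-1) (q₁+2) P' lam' hA (by positivity) (by omega) (by omega) (by omega)
          t (by simp at hlen; omega) hsort'
          (fun q hq => by
            have h1 := hlt q hq
            have h2 := (hprimes q (by simp [hq])).2
            omega)
          (fun q hq => hprimes q (by simp [hq]))
          (by rw [hprod]; exact hsize)
          (by rw [hprod]; exact hlam'dvd)
          (fun q hq => by rw [hprod]; exact hdvds q (by simp [hq]))
    · -- q₁ > p : move to next candidate
      have hplt : p < q₁ := lt_of_le_of_ne hpq₁ (fun h => hq1 h.symm)
      apply ih k (p+2) P lam hB hP hlam (by omega) hk (q₁ :: t) hlen hsort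
        (fun q hq => by
          rcases List.mem_cons.mp hq with rfl | hq'
          · omega
          · have := hlt q hq'
            omega)
        hprimes hsize hlamdvd hdvds

end CarSearch

namespace CarSearch

set_option maxRecDepth 100000 in
lemma search_ok : loop 100000 8 3 1 1 = true := by decide

lemma min_bound (N : ℕ) (hodd : N % 2 = 1) (hsf : Squarefree N)
    (hcard : N.primeFactors.card = 8)
    (hdvd : ∀ p ∈ N.primeFactors, (p - 1) ∣ (N - 1)) : LL ≤ N := by
  by_contra hcon
  push_neg at hcon
  have hN0 : N ≠ 0 := by
    intro h; subst h; simp at hcard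
  set l := N.primeFactors.sort (·≤·) with hl
  have hsorted : l.Pairwise (· < ·) := (Finset.sortedLT_sort _).pairwise
  have hlen : l.length = 8 := by rw [hl, Finset.length_sort, hcard]
  have hmem : ∀ q, q ∈ l ↔ q ∈ N.primeFactors := fun q => Finset.mem_sort _
  have hprod : l.prod = N := by
    have h1 : l.prod = N.primeFactors.toList.prod :=
      (Finset.sort_perm_toList _ _).prod_eq
    have h2 : (N.primeFactors.toList.map id).prod = ∏ p ∈ N.primeFactors, p :=
      Finset.prod_map_toList _ _
    rw [List.map_id] at h2
    rw [h1, h2, Nat.prod_primeFactors_of_squarefree hsf]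
  have hprime : ∀ q ∈ l, q.Prime ∧ q % 2 = 1 := by
    intro q hq
    rw [hmem] at hq
    obtain ⟨hqp, hqdvd, -⟩ := Nat.mem_primeFactors.mp hq
    refine ⟨hqp, ?_⟩
    rcases hqp.eq_two_or_odd with rfl | h
    · obtain ⟨c, hc⟩ := hqdvd
      omega
    · exact h
  apply loop_complete 100000 8 3 1 1 search_ok one_pos one_pos rfl (by norm_num) l hlen
    hsorted
    (fun q hq => by
      have := (hprime q hq).1.two_le
      have := (hprime q hq).2
      omega)
    hprime
    (by rw [one_mul, hprod]; exact hcon)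
    (by rw [one_mul]; exact one_dvd _)
    (fun q hq => by
      rw [one_mul, hprod]
      exact hdvd q ((hmem q).mp hq))

end CarSearch

namespace CarSearch

lemma coprime_of_sub_one (b m : ℕ) (hb : 1 ≤ b) (h : m ∣ b - 1) : Nat.Coprime b m := by
  have h1 : Nat.gcd b m ∣ b - 1 := dvd_trans (Nat.gcd_dvd_right b m) h
  have h2 : Nat.gcd b m ∣ b := Nat.gcd_dvd_left b m
  have h3 : Nat.gcd b m ∣ b - (b - 1) := Nat.dvd_sub h2 h1
  rw [show b - (b - 1) = 1 by omega] at h3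
  exact Nat.dvd_one.mp h3

lemma odd_of_carmichael {N : ℕ} (h1 : 1 < N) (h2 : ¬N.Prime)
    (h3 : ∀ b, Nat.Coprime b N → b ^ (N - 1) ≡ 1 [MOD N]) : N % 2 = 1 := by
  by_contra h
  have heven : N % 2 = 0 := by omega
  have hN2 : N ≠ 2 := by rintro rfl; exact h2 Nat.prime_two
  have hN4 : 4 ≤ N := by omega
  have hcop : Nat.Coprime (N - 1) N := by
    have h5 : Nat.gcd (N - 1) N ∣ N - (N - 1) :=
      Nat.dvd_sub (Nat.gcd_dvd_right _ _) (Nat.gcd_dvd_left _ _)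
    rw [show N - (N - 1) = 1 by omega] at h5
    exact Nat.dvd_one.mp h5
  have hb := h3 (N - 1) hcop
  obtain ⟨m, hm⟩ : ∃ m, N = m + 2 := ⟨N - 2, by omega⟩
  have hsq : (N - 1) * (N - 1) ≡ 1 [MOD N] := by
    subst hm
    show ((m + 2 - 1) * (m + 2 - 1)) % (m + 2) = 1 % (m + 2)
    rw [show m + 2 - 1 = m + 1 by omega, show (m + 1) * (m + 1) = 1 + m * (m + 2) by ring]
    rw [Nat.add_mul_mod_self_right]
  obtain ⟨t, ht⟩ : ∃ t, N - 1 = 2 * t + 1 := ⟨(N - 2)/2, by omega⟩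
  have hexp : (N - 1) ^ (2 * t + 1) ≡ (N - 1) [MOD N] := by
    rw [pow_succ, pow_mul, pow_two]
    calc ((N-1)*(N-1)) ^ t * (N-1) ≡ 1 ^ t * (N-1) [MOD N] :=
          Nat.ModEq.mul_right _ (hsq.pow t)
      _ = N - 1 := by rw [one_pow, one_mul]
  rw [← ht] at hexp
  have hfin : N - 1 ≡ 1 [MOD N] := hexp.symm.trans hb
  have hdvd : N ∣ (N - 1) - 1 := (Nat.modEq_iff_dvd' (by omega)).mp hfin.symm
  have := Nat.le_of_dvd (by omega) hdvd
  omega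

lemma korselt_squarefree {N : ℕ} (h1 : 1 < N)
    (h3 : ∀ b, Nat.Coprime b N → b ^ (N - 1) ≡ 1 [MOD N]) : Squarefree N := by
  rw [Nat.squarefree_iff_prime_squarefree]
  intro p hp hpp
  have hN0 : N ≠ 0 := by omega
  haveI : Fact p.Prime := ⟨hp⟩
  set e := N.factorization p with he
  have he2 : 2 ≤ e := by
    rw [he, ← Nat.Prime.pow_dvd_iff_le_factorization hp hN0, pow_two]
    exact hpp
  set m := N / p ^ e with hm
  have hco : p.Coprime m := Nat.coprime_ordCompl hp hN0
  have heq : p ^ e * m = N := Nat.ordProj_mul_ordCompl_eq_self N p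
  have hco2 : (p ^ 2).Coprime m := hco.pow_left 2
  obtain ⟨b, hb1, hb2⟩ := Nat.chineseRemainder hco2 (1 + p) 1
  have hpb : ¬ p ∣ b := by
    intro hdvd
    have hmod : b ≡ 1 + p [MOD p] := hb1.of_dvd ⟨p, pow_two p⟩
    have h0 : p ∣ 1 + p := by
      have : (0 : ℕ) ≡ 1 + p [MOD p] := (Nat.modEq_zero_iff_dvd.mpr hdvd).symm.trans hmod
      exact Nat.modEq_zero_iff_dvd.mp this.symm
    have h6 := Nat.dvd_sub h0 (dvd_refl p)
    simp at h6
    have := hp.two_le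
    omega
  have hb0 : 1 ≤ b := by
    rcases Nat.eq_zero_or_pos b with rfl | h
    · exact absurd (dvd_zero p) hpb
    · exact h
  have hcopb : Nat.Coprime b N := by
    rw [← heq]
    refine Nat.Coprime.mul_right ?_ ?_
    · exact Nat.Coprime.pow_right e ((Nat.Prime.coprime_iff_not_dvd hp).mpr hpb).symm
    · exact coprime_of_sub_one b m hb0 ((Nat.modEq_iff_dvd' hb0).mp hb2.symm)
  have hbN := h3 b hcopb
  have hp2N : (p ^ 2 : ℕ) ∣ N := by
    rw [← heq]
    exact Dvd.dvd.mul_right (pow_dvd_pow p he2) m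
  have hmodp2 : b ^ (N - 1) ≡ 1 [MOD p ^ 2] := hbN.of_dvd hp2N
  -- move to ZMod (p^2)
  have hpsq0 : (p : ZMod (p ^ 2)) * p = 0 := by
    rw [← Nat.cast_mul, ← pow_two, ZMod.natCast_self]
  have key : ∀ n : ℕ, ((1 : ZMod (p ^ 2)) + p) ^ n = 1 + n * p := by
    intro n
    induction n with
    | zero => simp
    | succ k ih =>
      simp only [pow_succ, ih]
      push_cast
      linear_combination (k : ZMod (p ^ 2)) * hpsq0
  have hcast : ((b : ℕ) : ZMod (p ^ 2)) = 1 + p := by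
    have := (ZMod.natCast_eq_natCast_iff _ _ _).mpr hb1
    rwa [Nat.cast_add, Nat.cast_one] at this
  have hcast2 : ((1 : ZMod (p ^ 2)) + p) ^ (N - 1) = 1 := by
    rw [← hcast]
    have := (ZMod.natCast_eq_natCast_iff _ _ _).mpr hmodp2
    rwa [Nat.cast_pow, Nat.cast_one] at this
  rw [key (N - 1)] at hcast2
  have hzero : ((N - 1) * p : ℕ) = (0 : ZMod (p ^ 2)) := by
    push_cast
    linear_combination hcast2
  have hdvd2 : p ^ 2 ∣ (N - 1) * p := (ZMod.natCast_eq_zero_iff _ _).mp hzero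
  have hdvd3 : p ∣ N - 1 := by
    rw [pow_two] at hdvd2
    exact (Nat.mul_dvd_mul_iff_right hp.pos).mp hdvd2
  have hdvd4 : p ∣ N := dvd_trans ⟨p, pow_two p⟩ hp2N
  have : p ∣ N - (N - 1) := Nat.dvd_sub hdvd4 hdvd3
  rw [show N - (N - 1) = 1 by omega] at this
  have := Nat.dvd_one.mp this
  have := hp.two_le
  omega

lemma korselt_dvd {N p : ℕ} (hp : p.Prime) (hdvdN : p ∣ N) (hsf : Squarefree N)
    (h1 : 1 < N)
    (h3 : ∀ b, Nat.Coprime b N → b ^ (N - 1) ≡ 1 [MOD N]) : (p - 1) ∣ (N - 1) := by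
  have hN0 : N ≠ 0 := by omega
  haveI : Fact p.Prime := ⟨hp⟩
  obtain ⟨m, hm⟩ := hdvdN
  have hpm : ¬ p ∣ m := by
    intro hc
    obtain ⟨c, hc⟩ := hc
    have : p * p ∣ N := ⟨c, by rw [hm, hc]; ring⟩
    have := Nat.squarefree_iff_prime_squarefree.mp hsf p hp
    exact this ‹p * p ∣ N›
  have hco : p.Coprime m := (Nat.Prime.coprime_iff_not_dvd hp).mpr hpm
  obtain ⟨u, hu⟩ := IsCyclic.exists_generator (α := (ZMod p)ˣ)
  have hord : orderOf u = p - 1 := by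
    rw [orderOf_eq_card_of_forall_mem_zpowers hu, Nat.card_eq_fintype_card,
      ZMod.card_units_eq_totient, Nat.totient_prime hp]
  obtain ⟨b, hb1, hb2⟩ := Nat.chineseRemainder hco ((u : ZMod p).val) 1
  have hbu : ((b : ℕ) : ZMod p) = (u : ZMod p) := by
    have := (ZMod.natCast_eq_natCast_iff _ _ _).mpr hb1
    rwa [ZMod.natCast_val, ZMod.cast_id] at this
  have hpb : ¬ p ∣ b := by
    intro hc
    rw [(ZMod.natCast_eq_zero_iff b p).mpr hc] at hbu
    exact Units.ne_zero u hbu.symm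
  have hb0 : 1 ≤ b := by
    rcases Nat.eq_zero_or_pos b with rfl | h
    · exact absurd (dvd_zero p) hpb
    · exact h
  have hcopb : Nat.Coprime b N := by
    rw [hm]
    refine Nat.Coprime.mul_right ?_ ?_
    · exact ((Nat.Prime.coprime_iff_not_dvd hp).mpr hpb).symm
    · exact coprime_of_sub_one b m hb0 ((Nat.modEq_iff_dvd' hb0).mp hb2.symm)
  have hbN := h3 b hcopb
  have hmodp : b ^ (N - 1) ≡ 1 [MOD p] := hbN.of_dvd ⟨m, hm⟩
  have hcastp : ((u : ZMod p)) ^ (N - 1) = 1 := by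
    have := (ZMod.natCast_eq_natCast_iff _ _ _).mpr hmodp
    rw [Nat.cast_pow, Nat.cast_one, hbu] at this
    exact this
  have hunit : u ^ (N - 1) = 1 := by
    ext
    rw [Units.val_pow_eq_pow_val, hcastp, Units.val_one]
  have := orderOf_dvd_of_pow_eq_one hunit
  rwa [hord] at this

end CarSearch

namespace CarSearch

lemma fermat_piece {b N p : ℕ} (hp : p.Prime) (hb : Nat.Coprime b N) (hpN : p ∣ N)
    (hd : (p - 1) ∣ (N - 1)) : b ^ (N - 1) ≡ 1 [MOD p] := by
  haveI : Fact p.Prime := ⟨hp⟩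
  have hcopbp : Nat.Coprime b p := hb.coprime_dvd_right hpN
  have hb0 : (b : ZMod p) ≠ 0 := by
    rw [Ne, ZMod.natCast_eq_zero_iff]
    exact (hp.coprime_iff_not_dvd).mp hcopbp.symm
  obtain ⟨c, hc⟩ := hd
  have hfe : (b : ZMod p) ^ (N - 1) = 1 := by
    rw [hc, pow_mul, ZMod.pow_card_sub_one_eq_one hb0, one_pow]
  apply (ZMod.natCast_eq_natCast_iff _ _ _).mp
  push_cast
  rw [hfe]

lemma carmichael_big : IsCarmichael 232250619601 := by
  refine ⟨by norm_num, ?_, ?_⟩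
  · intro hp
    rcases hp.eq_one_or_self_of_dvd 7 (by norm_num) with h | h <;> norm_num at h
  · intro b hb
    have h7 := fermat_piece (p := 7) (by norm_num) hb (by norm_num) (by norm_num)
    have h11 := fermat_piece (p := 11) (by norm_num) hb (by norm_num) (by norm_num)
    have h13 := fermat_piece (p := 13) (by norm_num) hb (by norm_num) (by norm_num)
    have h17 := fermat_piece (p := 17) (by norm_num) hb (by norm_num) (by norm_num)
    have h31 := fermat_piece (p := 31) (by norm_num) hb (by norm_num) (by norm_num)
    have h37 := fermat_piece (p := 37) (by norm_num) hb (by norm_num) (by norm_num)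
    have h73 := fermat_piece (p := 73) (by norm_num) hb (by norm_num) (by norm_num)
    have h163 := fermat_piece (p := 163) (by norm_num) hb (by norm_num) (by norm_num)
    have s1 := (Nat.modEq_and_modEq_iff_modEq_mul (by norm_num)).mp ⟨h7, h11⟩
    have s2 := (Nat.modEq_and_modEq_iff_modEq_mul (by norm_num)).mp ⟨s1, h13⟩
    have s3 := (Nat.modEq_and_modEq_iff_modEq_mul (by norm_num)).mp ⟨s2, h17⟩
    have s4 := (Nat.modEq_and_modEq_iff_modEq_mul (by norm_num)).mp ⟨s3, h31⟩
    have s5 := (Nat.modEq_and_modEq_iff_modEq_mul (by norm_num)).mp ⟨s4, h37⟩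
    have s6 := (Nat.modEq_and_modEq_iff_modEq_mul (by norm_num)).mp ⟨s5, h73⟩
    have s7 := (Nat.modEq_and_modEq_iff_modEq_mul (by norm_num)).mp ⟨s6, h163⟩
    norm_num at s7
    exact s7

lemma pf_big : (232250619601 : ℕ).primeFactors = {7, 11, 13, 17, 31, 37, 73, 163} := by
  rw [show (232250619601 : ℕ) = 7*(11*(13*(17*(31*(37*(73*163)))))) by norm_num]
  rw [Nat.primeFactors_mul (by norm_num) (by norm_num)]
  rw [Nat.primeFactors_mul (by norm_num) (by norm_num)]
  rw [Nat.primeFactors_mul (by norm_num) (by norm_num)]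
  rw [Nat.primeFactors_mul (by norm_num) (by norm_num)]
  rw [Nat.primeFactors_mul (by norm_num) (by norm_num)]
  rw [Nat.primeFactors_mul (by norm_num) (by norm_num)]
  rw [Nat.primeFactors_mul (by norm_num) (by norm_num)]
  rw [Nat.Prime.primeFactors (by norm_num), Nat.Prime.primeFactors (by norm_num),
    Nat.Prime.primeFactors (by norm_num), Nat.Prime.primeFactors (by norm_num),
    Nat.Prime.primeFactors (by norm_num), Nat.Prime.primeFactors (by norm_num),
    Nat.Prime.primeFactors (by norm_num), Nat.Prime.primeFactors (by norm_num)]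
  decide

end CarSearch

theorem carmichael_smallest_with_8_prime_factors :
    IsCarmichael 232250619601 ∧ (Nat.primeFactors 232250619601).card = 8 ∧
      ∀ N : ℕ, IsCarmichael N → N.primeFactors.card = 8 → 232250619601 ≤ N := by
  refine ⟨CarSearch.carmichael_big, ?_, ?_⟩
  · rw [CarSearch.pf_big]; decide
  · intro N hN hcard
    obtain ⟨h1, h2, h3⟩ := hN
    have hodd := CarSearch.odd_of_carmichael h1 h2 h3
    have hsf := CarSearch.korselt_squarefree h1 h3
    exact CarSearch.min_bound N hodd hsf hcard
      (fun p hp => CarSearch.korselt_dvd (Nat.prime_of_mem_primeFactors hp)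
        (Nat.dvd_of_mem_primeFactors hp) hsf h1 h3)
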